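/- (Dipole conservation equation, inertial frame.) For all indices i and m and all u: k_j (d/du)𝒯^{ij}{}_{:m}(u) + 𝒯^i{}_m(u) + k_j 𝒯^{ij}(u) v_m = 0 (sum over j), where 𝒯^i{}_m = η_{ml}𝒯^{il}, v = (1,0,0,0), v_m = η_{ml}v^l = (−1,0,0,0), and k_j = η_{jl}k^l = (−1, n̂). -/

import Mathlib

open scoped BigOperators

noncomputable section

/-- The Minkowski metric η = diag(−1,1,1,1) on ℝ⁴. -/
def eta (i j : Fin 4) : ℝ := if i = j then (if i = 0 then -1 else 1) else 0

/-- Minkowski inner product a·b = η_{ij} a^i b^j. -/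
def mdot (a b : Fin 4 → ℝ) : ℝ := ∑ i, ∑ j, eta i j * a i * b j

/-- Lowering an index with η : k_i = η_{ij} k^j. -/
def lo (a : Fin 4 → ℝ) (i : Fin 4) : ℝ := ∑ j, eta i j * a j

open MeasureTheory

/-- The point of the null hyperplane `P_u = {y : y⁰ = u + n̂·𝐲}` over the
spatial point `𝐲`. -/
def nullPt (n : EuclideanSpace ℝ (Fin 3)) (u : ℝ) (y : EuclideanSpace ℝ (Fin 3)) :
    Fin 4 → ℝ :=
  ![u + ∑ α, n α * y α, y 0, y 1, y 2]

/-- The null vector `k = (1, n̂)`. -/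
def kvec (n : EuclideanSpace ℝ (Fin 3)) : Fin 4 → ℝ := ![1, n 0, n 1, n 2]

/-- The retarded monopole moment `𝒯^{ij}(u) = ∫_{P_u} T^{ij}`. -/
def monopole (T : Fin 4 → Fin 4 → (Fin 4 → ℝ) → ℝ)
    (n : EuclideanSpace ℝ (Fin 3)) (i j : Fin 4) (u : ℝ) : ℝ :=
  ∫ y : EuclideanSpace ℝ (Fin 3), T i j (nullPt n u y)

/-- The lowered components of `ξ = (n̂·𝐲, 𝐲)`: `ξ_0 = −n̂·𝐲`, `ξ_α = y^α`. -/
def xiLo (n : EuclideanSpace ℝ (Fin 3)) (y : EuclideanSpace ℝ (Fin 3)) :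
    Fin 4 → ℝ :=
  ![-(∑ α, n α * y α), y 0, y 1, y 2]

/-- The retarded dipole moment `𝒯^{ij}{}_{:m}(u) = ∫_{P_u} T^{ij} ξ_m`. -/
def dipole (T : Fin 4 → Fin 4 → (Fin 4 → ℝ) → ℝ)
    (n : EuclideanSpace ℝ (Fin 3)) (i j m : Fin 4) (u : ℝ) : ℝ :=
  ∫ y : EuclideanSpace ℝ (Fin 3), T i j (nullPt n u y) * xiLo n y m

/-! ### Auxiliary material -/

abbrev E3 := EuclideanSpace ℝ (Fin 3)

/-- `nullPt` as a continuous linear map in `(u, y)` jointly. -/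
def Nmap (n : E3) : (ℝ × E3) →L[ℝ] (Fin 4 → ℝ) :=
  LinearMap.toContinuousLinearMap
  { toFun := fun p => ![p.1 + ∑ α, n α * p.2 α, p.2 0, p.2 1, p.2 2]
    map_add' := by
      intro p q; funext x
      fin_cases x <;> simp [Fin.sum_univ_three] <;> ring
    map_smul' := by
      intro c p; funext x
      fin_cases x <;> simp [Fin.sum_univ_three] <;> ring }

lemma nullPt_eq (n : E3) (u : ℝ) (y : E3) : nullPt n u y = Nmap n (u, y) := rfl

/-- The spatial index embedding `Fin 3 → Fin 4`, `α ↦ α + 1`. -/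
def idx : Fin 3 → Fin 4 := ![1, 2, 3]

lemma Nmap_dir0 (n : E3) : Nmap n (1, 0) = Pi.single (0 : Fin 4) 1 := by
  funext x
  fin_cases x <;> simp [Nmap, Pi.single_apply]

lemma Nmap_dir (n : E3) (α : Fin 3) :
    Nmap n (0, EuclideanSpace.single α (1:ℝ)) =
      (n α) • (Pi.single 0 1 : Fin 4 → ℝ) + (Pi.single (idx α) 1 : Fin 4 → ℝ) := by
  funext x
  fin_cases x <;> fin_cases α <;>
    simp [Nmap, idx, Pi.single_apply, EuclideanSpace.single_apply, Fin.sum_univ_three,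
      Fin.ext_iff] <;> simp (config := { decide := true }) <;> rfl

/-- `xiLo` as a continuous linear map in `y`. -/
def xiCLM (n : E3) (m : Fin 4) : E3 →L[ℝ] ℝ :=
  LinearMap.toContinuousLinearMap
  { toFun := fun y => xiLo n y m
    map_add' := by
      intro y z
      fin_cases m <;> simp [xiLo, Fin.sum_univ_three] <;> ring_nf
    map_smul' := by
      intro c y
      fin_cases m <;> simp [xiLo, Fin.sum_univ_three] <;> ring_nf }

lemma xiCLM_apply (n : E3) (m : Fin 4) (y : E3) : xiCLM n m y = xiLo n y m := rfl

lemma norm_sq_E3 (y : E3) : (y 0)^2 + (y 1)^2 + (y 2)^2 = ‖y‖^2 := by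
  rw [EuclideanSpace.norm_eq, Real.sq_sqrt (by positivity)]
  simp [Fin.sum_univ_three, sq_abs]

end

section Helpers

open MeasureTheory Metric Set

variable {T : Fin 4 → Fin 4 → (Fin 4 → ℝ) → ℝ}
  {R : ℝ} {n : E3}

/-- Integrability of continuous functions vanishing outside a ball. -/
lemma integrable_of_zero_outside {f : E3 → ℝ} (hf : Continuous f) (r : ℝ)
    (h : ∀ y : E3, r < ‖y‖ → f y = 0) : Integrable f := by
  apply hf.integrable_of_hasCompactSupport
  apply HasCompactSupport.intro (isCompact_closedBall (0:E3) r)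
  intro y hy
  exact h y (by simpa [mem_closedBall, dist_zero_right, not_le] using hy)

variable (hR : 0 < R)
  (hsupp : ∀ i j (y : Fin 4 → ℝ),
      R ^ 2 ≤ (y 1) ^ 2 + (y 2) ^ 2 + (y 3) ^ 2 → T i j y = 0)

section
include hsupp

include hR in
/-- Vanishing of `T` on the null plane far out. -/
lemma T_vanish (i j : Fin 4) (u : ℝ) (y : E3) (hy : R ≤ ‖y‖) :
    T i j (Nmap n (u, y)) = 0 := by
  apply hsupp
  have h1 : (Nmap n (u, y)) 1 = y 0 := rfl
  have h2 : (Nmap n (u, y)) 2 = y 1 := rfl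
  have h3 : (Nmap n (u, y)) 3 = y 2 := rfl
  rw [h1, h2, h3, norm_sq_E3]
  nlinarith [norm_nonneg y]

include hR in
/-- Vanishing of the derivative of `T` on the null plane far out. -/
lemma fderiv_T_vanish (i j : Fin 4) (u : ℝ) (y : E3) (hy : R < ‖y‖) :
    fderiv ℝ (T i j) (Nmap n (u, y)) = 0 := by
  have hopen : IsOpen {x : Fin 4 → ℝ | R ^ 2 < (x 1)^2 + (x 2)^2 + (x 3)^2} := by
    have : Continuous fun x : Fin 4 → ℝ => (x 1)^2 + (x 2)^2 + (x 3)^2 := by continuity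
    exact isOpen_lt continuous_const this
  have hmem : Nmap n (u, y) ∈ {x : Fin 4 → ℝ | R ^ 2 < (x 1)^2 + (x 2)^2 + (x 3)^2} := by
    have h1 : (Nmap n (u, y)) 1 = y 0 := rfl
    have h2 : (Nmap n (u, y)) 2 = y 1 := rfl
    have h3 : (Nmap n (u, y)) 3 = y 2 := rfl
    simp only [Set.mem_setOf_eq, h1, h2, h3]
    rw [norm_sq_E3]
    exact pow_lt_pow_left₀ hy hR.le (by norm_num)
  have hev : T i j =ᶠ[nhds (Nmap n (u, y))] (fun _ => 0) := by
    filter_upwards [hopen.mem_nhds hmem] with x hx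
    exact hsupp i j x hx.le
  rw [hev.fderiv_eq, fderiv_fun_const]
  rfl

end

end Helpers

section DUI

open MeasureTheory Metric Set Filter

/-- Differentiation under the integral sign for smooth functions vanishing outside a ball. -/
lemma hasDerivAt_integral_param {h : ℝ × E3 → ℝ} (hsm : ContDiff ℝ (⊤ : ℕ∞) h)
    {r : ℝ} (hz : ∀ (u : ℝ) (y : E3), r < ‖y‖ → h (u, y) = 0) (u₀ : ℝ) :
    HasDerivAt (fun u => ∫ y : E3, h (u, y)) (∫ y : E3, fderiv ℝ h (u₀, y) (1, 0)) u₀ := by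
  have hz' : ∀ (u : ℝ) (y : E3), r < ‖y‖ → fderiv ℝ h (u, y) = 0 := by
    intro u y hy
    have hopen : IsOpen {p : ℝ × E3 | r < ‖p.2‖} :=
      isOpen_lt continuous_const (continuous_norm.comp continuous_snd)
    have hev : h =ᶠ[nhds (u, y)] fun _ => 0 := by
      filter_upwards [hopen.mem_nhds hy] with p hp
      exact hz p.1 p.2 hp
    rw [hev.fderiv_eq]
    exact fderiv_const_apply 0
  obtain ⟨M, hM⟩ : ∃ M, ∀ p ∈ (closedBall u₀ 1 ×ˢ closedBall (0:E3) r),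
      ‖fderiv ℝ h p‖ ≤ M :=
    ((isCompact_closedBall u₀ 1).prod (isCompact_closedBall (0:E3) r)).exists_bound_of_continuousOn
      ((hsm.fderiv_right (m := 0) (by exact_mod_cast le_top)).continuous.continuousOn)
  have key := hasDerivAt_integral_of_dominated_loc_of_deriv_le (μ := volume)
    (F := fun u (y : E3) => h (u, y)) (F' := fun u (y : E3) => fderiv ℝ h (u, y) (1, 0))
    (x₀ := u₀) (bound := Set.indicator (closedBall (0:E3) r) (fun _ => M))
    (s := ball u₀ 1) (ball_mem_nhds u₀ zero_lt_one) ?_ ?_ ?_ ?_ ?_ ?_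
  · exact key.2
  · refine Eventually.of_forall fun u => ?_
    exact (hsm.continuous.comp (Continuous.prodMk_right u)).aestronglyMeasurable
  · exact integrable_of_zero_outside (hsm.continuous.comp (Continuous.prodMk_right u₀)) r
      (fun y hy => hz u₀ y hy)
  · exact (((hsm.fderiv_right (m := 0) (by exact_mod_cast le_top)).continuous.comp
      (Continuous.prodMk_right u₀)).clm_apply continuous_const).aestronglyMeasurable
  · refine Eventually.of_forall fun y => fun u hu => ?_
    show ‖fderiv ℝ h (u, y) (1, 0)‖ ≤ (closedBall (0:E3) r).indicator (fun _ => M) y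
    by_cases hy : ‖y‖ ≤ r
    · have hmem : y ∈ closedBall (0:E3) r := by simpa [mem_closedBall, dist_zero_right] using hy
      rw [Set.indicator_of_mem hmem]
      have hnorm1 : ‖((1:ℝ), (0:E3))‖ = 1 := by
        simp [Prod.norm_def]
      calc ‖fderiv ℝ h (u, y) (1, 0)‖ ≤ ‖fderiv ℝ h (u, y)‖ * ‖((1:ℝ), (0:E3))‖ :=
            (fderiv ℝ h (u, y)).le_opNorm _
        _ = ‖fderiv ℝ h (u, y)‖ := by rw [hnorm1, mul_one]
        _ ≤ M := hM (u, y) (by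
            constructor
            · exact ball_subset_closedBall hu
            · simpa [mem_closedBall, dist_zero_right] using hy)
    · push_neg at hy
      rw [hz' u y hy]
      have hmem : y ∉ closedBall (0:E3) r := by
        simp [mem_closedBall, dist_zero_right]; linarith
      rw [Set.indicator_of_notMem hmem]
      simp
  · rw [integrable_indicator_iff measurableSet_closedBall]
    exact integrableOn_const measure_closedBall_lt_top.ne
  · refine Eventually.of_forall fun y => fun u hu => ?_
    have H := ((hsm.differentiable (by simp)) (u, y)).hasFDerivAt
    exact H.comp_hasDerivAt u ((hasDerivAt_id u).prodMk (hasDerivAt_const u y))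

/-- Derivative of the spatial slice `z ↦ f (Nmap n (u, z))`. -/
lemma hasFDerivAt_slice {f : (Fin 4 → ℝ) → ℝ} (hf : ContDiff ℝ (⊤ : ℕ∞) f)
    (n : E3) (u : ℝ) (y : E3) :
    HasFDerivAt (fun z : E3 => f (Nmap n (u, z)))
      ((fderiv ℝ f (Nmap n (u, y))).comp ((Nmap n).comp (ContinuousLinearMap.inr ℝ ℝ E3))) y := by
  have hinner : HasFDerivAt (fun z : E3 => Nmap n (u, z))
      ((Nmap n).comp (ContinuousLinearMap.inr ℝ ℝ E3)) y := by
    have heq : (fun z : E3 => Nmap n (u, z)) =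
        fun z => Nmap n (u, 0) + ((Nmap n).comp (ContinuousLinearMap.inr ℝ ℝ E3)) z := by
      funext z
      rw [ContinuousLinearMap.comp_apply, ContinuousLinearMap.inr_apply, ← map_add,
        Prod.mk_add_mk, add_zero, zero_add]
    rw [heq]
    exact (((Nmap n).comp (ContinuousLinearMap.inr ℝ ℝ E3)).hasFDerivAt).const_add _
  exact ((hf.differentiable (by simp) _).hasFDerivAt).comp y hinner

end DUI

section Algebra

lemma lo_kvec (n : E3) : lo (kvec n) = ![-1, n 0, n 1, n 2] := by
  funext j
  fin_cases j <;> simp [lo, eta, kvec, Fin.sum_univ_four]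

lemma lo_v : lo ![1, 0, 0, 0] = ![-1, 0, 0, 0] := by
  funext j
  fin_cases j <;> simp [lo, eta, Fin.sum_univ_four]

lemma eta_row (m : Fin 4) (f : Fin 4 → ℝ) :
    ∑ l, eta m l * f l = (if m = 0 then -1 else 1) * f m := by
  fin_cases m <;> simp [eta, Fin.sum_univ_four]

lemma xiCLM_single (n : E3) (m : Fin 4) (α : Fin 3) :
    xiCLM n m (EuclideanSpace.single α 1) =
      if m = 0 then -(n α) else (if m = idx α then 1 else 0) := by
  fin_cases m <;> fin_cases α <;>
    simp [xiCLM_apply, xiLo, idx, EuclideanSpace.single_apply, Fin.sum_univ_three] <;>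
    simp (config := { decide := true })

end Algebra

open MeasureTheory Metric Set Filter

/-- Dipole conservation equation:
`k_j (d/du)𝒯^{ij}{}_{:m} + 𝒯^i{}_m + k_j 𝒯^{ij} v_m = 0` with `v = (1,0,0,0)`. -/
theorem dipole_conservation
    (T : Fin 4 → Fin 4 → (Fin 4 → ℝ) → ℝ)
    (hTsmooth : ∀ i j, ContDiff ℝ (⊤ : ℕ∞) (T i j))
    (hTsymm : ∀ i j y, T i j y = T j i y)
    (hTcons : ∀ i y, ∑ j, fderiv ℝ (T i j) y (Pi.single j 1) = 0)
    (R : ℝ) (hR : 0 < R)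
    (hsupp : ∀ i j (y : Fin 4 → ℝ),
      R ^ 2 ≤ (y 1) ^ 2 + (y 2) ^ 2 + (y 3) ^ 2 → T i j y = 0)
    (n : EuclideanSpace ℝ (Fin 3)) (hn : ‖n‖ = 1) :
    ∀ (i m : Fin 4) (u : ℝ),
      ∑ j, lo (kvec n) j * deriv (fun s => dipole T n i j m s) u
        + (∑ l, eta m l * monopole T n i l u)
        + (∑ j, lo (kvec n) j * monopole T n i j u) * lo ![1, 0, 0, 0] m = 0 := by
  intro i m u
  have htop : ∀ i j, Differentiable ℝ (T i j) :=
    fun i j => (hTsmooth i j).differentiable (by simp)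
  -- continuity of the composed fderiv applied to a fixed vector
  have hcont : ∀ (j : Fin 4) (w : Fin 4 → ℝ),
      Continuous fun y : E3 => fderiv ℝ (T i j) (Nmap n (u, y)) w := by
    intro j w
    exact (((hTsmooth i j).fderiv_right (m := 0) (by exact_mod_cast le_top)).continuous.comp
      ((Nmap n).continuous.comp (Continuous.prodMk_right u))).clm_apply continuous_const
  have hTcont : ∀ j : Fin 4, Continuous fun y : E3 => T i j (Nmap n (u, y)) :=
    fun j => (hTsmooth i j).continuous.comp ((Nmap n).continuous.comp (Continuous.prodMk_right u))
  have hvanD : ∀ (j : Fin 4) (w : Fin 4 → ℝ) (y : E3), R < ‖y‖ →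
      fderiv ℝ (T i j) (Nmap n (u, y)) w = 0 := by
    intro j w y hy
    rw [fderiv_T_vanish hR hsupp i j u y hy]
    rfl
  have hXcont : Continuous fun y : E3 => xiLo n y m := (xiCLM n m).continuous
  -- Step 1: derivative of the dipole
  have hderiv : ∀ j, deriv (fun s => dipole T n i j m s) u
      = ∫ y : E3, xiLo n y m * fderiv ℝ (T i j) (nullPt n u y) (Pi.single 0 1) := by
    intro j
    have hH : ContDiff ℝ (⊤ : ℕ∞) (fun p : ℝ × E3 => T i j (Nmap n p) * xiLo n p.2 m) := by
      apply ContDiff.mul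
      · exact (hTsmooth i j).comp (Nmap n).contDiff
      · exact (xiCLM n m).contDiff.comp contDiff_snd
    have hzero : ∀ (s : ℝ) (y : E3), R < ‖y‖ →
        T i j (Nmap n (s, y)) * xiLo n y m = 0 := by
      intro s y hy
      rw [T_vanish hR hsupp i j s y hy.le, zero_mul]
    have H := hasDerivAt_integral_param hH hzero u
    have hd : deriv (fun s => dipole T n i j m s) u
        = ∫ y : E3, fderiv ℝ (fun p : ℝ × E3 => T i j (Nmap n p) * xiLo n p.2 m) (u, y) (1, 0) :=
      H.deriv
    rw [hd]
    refine integral_congr_ae (Eventually.of_forall fun y => ?_)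
    show (fderiv ℝ (fun p : ℝ × E3 => T i j (Nmap n p) * xiLo n p.2 m) (u, y)) (1, 0)
        = xiLo n y m * fderiv ℝ (T i j) (nullPt n u y) (Pi.single 0 1)
    -- compute the fderiv of the product
    have hA : HasFDerivAt (fun p : ℝ × E3 => T i j (Nmap n p))
        ((fderiv ℝ (T i j) (Nmap n (u, y))).comp (Nmap n)) (u, y) :=
      ((htop i j _).hasFDerivAt).comp _ (Nmap n).hasFDerivAt
    have hB : HasFDerivAt (fun p : ℝ × E3 => xiLo n p.2 m)
        ((xiCLM n m).comp (ContinuousLinearMap.snd ℝ ℝ E3)) (u, y) :=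
      ((xiCLM n m).comp (ContinuousLinearMap.snd ℝ ℝ E3)).hasFDerivAt
    rw [(hA.fun_mul hB).fderiv]
    have h1 : (xiCLM n m) ((0 : E3)) = 0 := map_zero _
    have h2 : Nmap n ((1 : ℝ), (0 : E3)) = Pi.single (0 : Fin 4) 1 := Nmap_dir0 n
    show T i j (Nmap n (u, y)) * xiCLM n m (0 : E3)
        + xiLo n y m * fderiv ℝ (T i j) (Nmap n (u, y)) (Nmap n (1, 0)) = _
    rw [h1, h2, mul_zero, zero_add]
    rfl
  -- integrability of the derivative integrand
  have hIntD : ∀ j, Integrable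
      (fun y : E3 => xiLo n y m * fderiv ℝ (T i j) (nullPt n u y) (Pi.single 0 1)) := by
    intro j
    refine integrable_of_zero_outside (hXcont.mul (hcont j _)) R fun y hy => ?_
    rw [nullPt_eq, hvanD j _ y hy, mul_zero]
  -- Step 3: push the sum inside the integral
  have hsum1 : ∑ j, lo (kvec n) j * deriv (fun s => dipole T n i j m s) u
      = ∫ y : E3, ∑ j, lo (kvec n) j *
          (xiLo n y m * fderiv ℝ (T i j) (nullPt n u y) (Pi.single 0 1)) := by
    rw [integral_finset_sum _ (fun j _ => (hIntD j).const_mul _)]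
    refine Finset.sum_congr rfl fun j _ => ?_
    rw [hderiv j, integral_const_mul]
  -- Step 4: pointwise conservation identity
  have hslice : ∀ (α : Fin 3) (y : E3),
      (fderiv ℝ (fun z : E3 => T i (idx α) (Nmap n (u, z))) y) (EuclideanSpace.single α 1)
        = n α * fderiv ℝ (T i (idx α)) (nullPt n u y) (Pi.single 0 1)
          + fderiv ℝ (T i (idx α)) (nullPt n u y) (Pi.single (idx α) 1) := by
    intro α y
    rw [(hasFDerivAt_slice (hTsmooth i (idx α)) n u y).fderiv]
    show fderiv ℝ (T i (idx α)) (Nmap n (u, y)) (Nmap n (0, EuclideanSpace.single α 1)) = _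
    rw [Nmap_dir, map_add, _root_.map_smul, nullPt_eq]
    simp [smul_eq_mul]
  have hpoint : ∀ y : E3,
      ∑ j, lo (kvec n) j * (xiLo n y m * fderiv ℝ (T i j) (nullPt n u y) (Pi.single 0 1))
        = ∑ α : Fin 3, (fderiv ℝ (fun z : E3 => T i (idx α) (Nmap n (u, z))) y)
            (EuclideanSpace.single α 1) * xiLo n y m := by
    intro y
    have hcons := hTcons i (nullPt n u y)
    rw [Fin.sum_univ_four] at hcons
    rw [Fin.sum_univ_four, Fin.sum_univ_three, hslice 0 y, hslice 1 y, hslice 2 y]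
    simp only [lo_kvec, idx, Matrix.cons_val_zero, Matrix.cons_val_one, Matrix.head_cons,
      Matrix.cons_val_two, Matrix.tail_cons, Matrix.cons_val_three, Matrix.head_fin_const]
    linear_combination (-(xiLo n y m)) * hcons
  -- Step 5: integration by parts in each spatial direction
  have hIBP : ∀ α : Fin 3,
      ∫ y : E3, (fderiv ℝ (fun z : E3 => T i (idx α) (Nmap n (u, z))) y)
          (EuclideanSpace.single α 1) * xiLo n y m
        = -(monopole T n i (idx α) u * xiCLM n m (EuclideanSpace.single α 1)) := by
    intro α
    set v : E3 := EuclideanSpace.single α 1 with hv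
    set f : E3 → ℝ := fun z => T i (idx α) (Nmap n (u, z)) with hf
    set g : E3 → ℝ := fun z => xiLo n z m with hg
    have hfdiff : Differentiable ℝ f :=
      fun z => (hasFDerivAt_slice (hTsmooth i (idx α)) n u z).differentiableAt
    have hgdiff : Differentiable ℝ g := (xiCLM n m).differentiable
    have hgder : ∀ z : E3, fderiv ℝ g z = xiCLM n m := by
      intro z
      have : g = ⇑(xiCLM n m) := rfl
      rw [this, ContinuousLinearMap.fderiv]
    have hfd : ∀ z : E3, fderiv ℝ f z v
        = fderiv ℝ (T i (idx α)) (Nmap n (u, z)) (Nmap n (0, v)) := by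
      intro z
      rw [(hasFDerivAt_slice (hTsmooth i (idx α)) n u z).fderiv]
      rfl
    have h1 : Integrable (fun z : E3 => fderiv ℝ f z v * g z) := by
      refine integrable_of_zero_outside ?_ R fun z hz => ?_
      · simp only [hfd]
        exact (hcont (idx α) _).mul hXcont
      · rw [hfd, hvanD _ _ z hz, zero_mul]
    have h2 : Integrable (fun z : E3 => f z * fderiv ℝ g z v) := by
      refine integrable_of_zero_outside ?_ R fun z hz => ?_
      · simp only [hgder]
        exact (hTcont (idx α)).mul continuous_const
      · simp only [hf, T_vanish hR hsupp i (idx α) u z hz.le, zero_mul]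
    have h3 : Integrable (fun z : E3 => f z * g z) := by
      refine integrable_of_zero_outside ((hTcont (idx α)).mul hXcont) R fun z hz => ?_
      simp only [hf, T_vanish hR hsupp i (idx α) u z hz.le, zero_mul]
    have hibp := integral_mul_fderiv_eq_neg_fderiv_mul_of_integrable h1 h2 h3 (fun x _ => hfdiff x) (fun x _ => hgdiff x)
      (v := v)
    have e1 : ∫ z : E3, f z * fderiv ℝ g z v
        = monopole T n i (idx α) u * xiCLM n m v := by
      simp only [hgder]
      rw [integral_mul_const]
      rfl
    rw [e1] at hibp
    linarith [hibp]
  -- Step 6: assemble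
  have hS : ∑ j, lo (kvec n) j * deriv (fun s => dipole T n i j m s) u
      = -∑ α : Fin 3, monopole T n i (idx α) u * xiCLM n m (EuclideanSpace.single α 1) := by
    rw [hsum1]
    have hint2 : ∀ α : Fin 3, Integrable (fun y : E3 =>
        (fderiv ℝ (fun z : E3 => T i (idx α) (Nmap n (u, z))) y)
          (EuclideanSpace.single α 1) * xiLo n y m) := by
      intro α
      have hfd : ∀ z : E3, (fderiv ℝ (fun z : E3 => T i (idx α) (Nmap n (u, z))) z)
          (EuclideanSpace.single α 1)
          = fderiv ℝ (T i (idx α)) (Nmap n (u, z)) (Nmap n (0, EuclideanSpace.single α 1)) := by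
        intro z
        rw [(hasFDerivAt_slice (hTsmooth i (idx α)) n u z).fderiv]
        rfl
      refine integrable_of_zero_outside ?_ R fun z hz => ?_
      · simp only [hfd]
        exact (hcont (idx α) _).mul hXcont
      · rw [hfd, hvanD _ _ z hz, zero_mul]
    calc ∫ y : E3, ∑ j, lo (kvec n) j *
            (xiLo n y m * fderiv ℝ (T i j) (nullPt n u y) (Pi.single 0 1))
        = ∫ y : E3, ∑ α : Fin 3, (fderiv ℝ (fun z : E3 => T i (idx α) (Nmap n (u, z))) y)
            (EuclideanSpace.single α 1) * xiLo n y m :=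
          integral_congr_ae (Filter.Eventually.of_forall hpoint)
      _ = ∑ α : Fin 3, ∫ y : E3, (fderiv ℝ (fun z : E3 => T i (idx α) (Nmap n (u, z))) y)
            (EuclideanSpace.single α 1) * xiLo n y m :=
          integral_finset_sum _ (fun α _ => hint2 α)
      _ = ∑ α : Fin 3, -(monopole T n i (idx α) u * xiCLM n m (EuclideanSpace.single α 1)) :=
          Finset.sum_congr rfl (fun α _ => hIBP α)
      _ = -∑ α : Fin 3, monopole T n i (idx α) u * xiCLM n m (EuclideanSpace.single α 1) := by
          rw [Finset.sum_neg_distrib]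
  -- Step 7: final algebra
  rw [hS, eta_row]
  rw [Fin.sum_univ_three, Fin.sum_univ_four]
  simp only [xiCLM_single, lo_kvec, lo_v, idx, Matrix.cons_val_zero, Matrix.cons_val_one,
    Matrix.head_cons, Matrix.cons_val_two, Matrix.tail_cons, Matrix.cons_val_three,
    Matrix.head_fin_const]
  fin_cases m <;> simp <;> ring
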